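/- Let H be a complex Hilbert space and J an antiunitary on H with J ∘ J = id. Then there exists a Hilbert basis (orthonormal basis) (e_i)_{i ∈ ι} of H each of whose vectors is fixed by J, i.e., J (e_i) = e_i for all i. Consequently, with respect to such a basis J acts as coordinatewise complex conjugation: J(∑ᵢ cᵢ • eᵢ) = ∑ᵢ (conj cᵢ) • eᵢ. -/

import Mathlib

open scoped ComplexInnerProductSpace

universe u

open Submodule in
/-- Let `H` be a complex Hilbert space and `J` an antiunitary on `H`
with `J ∘ J = id`.  Then there is a Hilbert (orthonormal) basis of `H` consisting of
vectors fixed by `J`; with respect to it `J` acts as coordinatewise complex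
conjugation. -/
theorem stmt_9 {H : Type u} [NormedAddCommGroup H] [InnerProductSpace ℂ H] [CompleteSpace H]
    (J : H → H)
    (hbij : Function.Bijective J)
    (hadd : ∀ x y : H, J (x + y) = J x + J y)
    (hconj : ∀ (c : ℂ) (x : H), J (c • x) = (starRingEnd ℂ c) • J x)
    (hinner : ∀ x y : H, ⟪J x, J y⟫ = ⟪y, x⟫)
    (hinvol : ∀ x : H, J (J x) = x) :
    ∃ (ι : Type u) (b : HilbertBasis ι ℂ H),
      (∀ i : ι, J (b i) = b i) ∧
      ∀ (x : H) (i : ι), b.repr (J x) i = starRingEnd ℂ (b.repr x i) := by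
  classical
  -- collection of orthonormal sets of J-fixed vectors
  set C : Set (Set H) := {s | (∀ x ∈ s, J x = x) ∧
    ∀ v ∈ s, ∀ w ∈ s, ⟪v, w⟫ = if v = w then (1 : ℂ) else 0} with hC
  have hzorn : ∀ c ⊆ C, IsChain (· ⊆ ·) c → ∃ ub ∈ C, ∀ t ∈ c, t ⊆ ub := by
    intro c hcC hchain
    refine ⟨⋃₀ c, ⟨?_, ?_⟩, fun t ht => Set.subset_sUnion_of_mem ht⟩
    · rintro x ⟨t, htc, hxt⟩
      exact (hcC htc).1 x hxt
    · rintro v ⟨t₁, ht₁, hv⟩ w ⟨t₂, ht₂, hw⟩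
      rcases hchain.total ht₁ ht₂ with h | h
      · exact (hcC ht₂).2 v (h hv) w hw
      · exact (hcC ht₁).2 v hv w (h hw)
  obtain ⟨s, hs⟩ := zorn_subset C hzorn
  obtain ⟨hsC, hsmax'⟩ := hs
  have hsmax : ∀ t, t ∈ C → s ⊆ t → t ⊆ s := fun t ht hst => hsmax' ht hst
  obtain ⟨hfix, hon⟩ := hsC
  have hon' : Orthonormal ℂ ((↑) : s → H) := by
    rw [orthonormal_subtype_iff_ite]
    exact hon
  -- orthogonality: (span s)ᗮ = ⊥
  have hsp : (span ℂ (Set.range ((↑) : s → H)))ᗮ = ⊥ := by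
    rw [Subtype.range_coe]
    rw [Submodule.eq_bot_iff]
    intro x hx
    by_contra hx0
    have hxs : ∀ e ∈ s, ⟪e, x⟫ = 0 := fun e he =>
      (Submodule.mem_orthogonal _ _).1 hx e (Submodule.subset_span he)
    have hJxs : ∀ e ∈ s, ⟪e, J x⟫ = 0 := by
      intro e he
      have : ⟪J (J e), J x⟫ = ⟪x, J e⟫ := hinner (J e) x
      rw [hinvol, hfix e he] at this
      rw [this, ← inner_conj_symm, hxs e he, map_zero]
    -- produce a nonzero J-fixed vector orthogonal to s
    obtain ⟨y, hy0, hJy, hys⟩ : ∃ y : H, y ≠ 0 ∧ J y = y ∧ ∀ e ∈ s, ⟪e, y⟫ = 0 := by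
      by_cases h : x + J x = 0
      · refine ⟨Complex.I • x, ?_, ?_, ?_⟩
        · simp [smul_eq_zero, Complex.I_ne_zero, hx0]
        · have hJx : J x = -x := by
            have := congrArg (fun z => z - x) h
            simpa [add_sub_cancel_left] using eq_neg_of_add_eq_zero_right h
          rw [hconj, hJx, Complex.conj_I, neg_smul, smul_neg, neg_neg]
        · intro e he
          rw [inner_smul_right, hxs e he, mul_zero]
      · refine ⟨x + J x, h, ?_, ?_⟩
        · rw [hadd, hinvol, add_comm]
        · intro e he
          rw [inner_add_right, hxs e he, hJxs e he, add_zero]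
    set u : H := ((‖y‖ : ℂ))⁻¹ • y with hu
    have hnu : ‖u‖ = 1 := by
      rw [hu, norm_smul]
      simp [norm_ne_zero_iff.2 hy0]
    have hJu : J u = u := by
      rw [hu, hconj, hJy]
      congr 1
      simp [Complex.conj_ofReal]
    have hus : ∀ e ∈ s, ⟪e, u⟫ = 0 := by
      intro e he
      rw [hu, inner_smul_right, hys e he, mul_zero]
    have huu : ⟪u, u⟫ = 1 := by
      rw [@inner_self_eq_norm_sq_to_K ℂ, hnu]
      norm_num
    have hu_not : u ∉ s := by
      intro huS
      rw [hus u huS] at huu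
      exact zero_ne_one huu
    have : insert u s ∈ C := by
      constructor
      · rintro z hz
        rcases hz with rfl | hz
        · exact hJu
        · exact hfix z hz
      · rintro v hv w hw
        rcases hv with rfl | hv <;> rcases hw with rfl | hw
        · simp [huu, hnu]
        · have hne : u ≠ w := fun h => hu_not (h ▸ hw)
          rw [if_neg hne, ← inner_conj_symm, hus w hw, map_zero]
        · have hne : v ≠ u := fun h => hu_not (h ▸ hv)
          rw [if_neg hne, hus v hv]
        · exact hon v hv w hw
    exact hu_not (hsmax _ this (Set.subset_insert u s) (Set.mem_insert u s))
  refine ⟨↥s, HilbertBasis.mkOfOrthogonalEqBot hon' hsp, ?_, ?_⟩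
  · intro i
    rw [HilbertBasis.coe_mkOfOrthogonalEqBot]
    exact hfix i i.2
  · intro x i
    have hco : (HilbertBasis.mkOfOrthogonalEqBot hon' hsp : ↥s → H) = ((↑) : s → H) :=
      HilbertBasis.coe_mkOfOrthogonalEqBot hon' hsp
    rw [HilbertBasis.repr_apply_apply, HilbertBasis.repr_apply_apply, hco]
    have : ⟪J ((i : H)), J x⟫ = ⟪x, (i : H)⟫ := hinner _ x
    rw [hfix i i.2] at this
    rw [this, ← inner_conj_symm]
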